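/- Let E be a homogeneous Moran set determined by a collection of closed intervals fulfilling the homogeneous Moran structure for the sequences {n_k} and {c_k}. Then for all integers k ≥ 2 and l ≥ 1, every R with δ_k < R ≤ δ_{k−1}, every r with δ_{k+l+1} < r ≤ δ_{k+l}, and every x ∈ E, N_r(B(x,R) ∩ E) ≤ 4·n_k n_{k+1}⋯n_{k+l+1}. -/
import Mathlib


open Metric Filter Set
open scoped ENNReal

/-- `coveringNumber r A` is the smallest number of balls of radius `r`
needed to cover `A` (as an extended nonnegative real, `⊤` if no finite cover exists). -/
noncomputable def coveringNumber {X : Type*} [MetricSpace X] (r : ℝ) (A : Set X) : ℝ≥0∞ :=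
  sInf {m : ℝ≥0∞ | ∃ S : Finset X, (S.card : ℝ≥0∞) = m ∧ A ⊆ ⋃ y ∈ S, Metric.ball y r}

/-- A word `σ = σ₁σ₂⋯σₖ ∈ Ωₖ`: its `j`-th letter (0-indexed `j`) satisfies
`1 ≤ σⱼ₊₁ ≤ n (j+1)`. -/
def MoranWord (n : ℕ → ℕ) (σ : List ℕ) : Prop :=
  ∀ j, j < σ.length → 1 ≤ σ.getD j 0 ∧ σ.getD j 0 ≤ n (j + 1)

/-- A collection of closed intervals of `[0,1]` fulfilling the homogeneous Moran
structure for the sequences `{nₖ}` and `{cₖ}`. -/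
structure HomMoranStructure (n : ℕ → ℕ) (c : ℕ → ℝ) where
  I : List ℕ → Set ℝ
  root : I [] = Set.Icc 0 1
  isClosedInterval : ∀ σ, MoranWord n σ → ∃ x y : ℝ, x ≤ y ∧ I σ = Set.Icc x y
  subset : ∀ σ, MoranWord n σ → ∀ i, 1 ≤ i → i ≤ n (σ.length + 1) → I (σ ++ [i]) ⊆ I σ
  disj : ∀ σ, MoranWord n σ → ∀ i₁ i₂, 1 ≤ i₁ → i₁ < i₂ → i₂ ≤ n (σ.length + 1) →
    interior (I (σ ++ [i₁])) ∩ interior (I (σ ++ [i₂])) = ∅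
  ratio : ∀ σ, MoranWord n σ → ∀ i, 1 ≤ i → i ≤ n (σ.length + 1) →
    Metric.diam (I (σ ++ [i])) = c (σ.length + 1) * Metric.diam (I σ)

/-- The homogeneous Moran set `E = ⋂_{k≥1} ⋃_{σ∈Ωₖ} I_σ` determined by a
homogeneous Moran structure. -/
def moranSet {n : ℕ → ℕ} {c : ℕ → ℝ} (S : HomMoranStructure n c) : Set ℝ :=
  ⋂ k : ℕ, ⋃ σ : List ℕ, ⋃ _ : MoranWord n σ ∧ σ.length = k + 1, S.I σ

/-- `moranDelta c k = c₁c₂⋯cₖ`, with `moranDelta c 0 = 1`. -/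
noncomputable def moranDelta (c : ℕ → ℝ) (k : ℕ) : ℝ :=
  ∏ i ∈ Finset.Icc 1 k, c i

section Helpers

lemma mw_append_left {n : ℕ → ℕ} {σ : List ℕ} {i : ℕ} (h : MoranWord n (σ ++ [i])) :
    MoranWord n σ := by
  intro j hj
  have := h j (by simp; omega)
  rwa [List.getD_append _ _ _ _ hj] at this

lemma mw_append_letter {n : ℕ → ℕ} {σ : List ℕ} {i : ℕ} (h : MoranWord n (σ ++ [i])) :
    1 ≤ i ∧ i ≤ n (σ.length + 1) := by
  have := h σ.length (by simp)
  rwa [List.getD_append_right _ _ _ _ le_rfl, Nat.sub_self] at this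

lemma mw_take {n : ℕ → ℕ} {σ : List ℕ} (h : MoranWord n σ) (m : ℕ) :
    MoranWord n (σ.take m) := by
  intro j hj
  simp only [List.length_take, lt_min_iff] at hj
  have hg : (σ.take m).getD j 0 = σ.getD j 0 := by
    rw [List.getD_eq_getElem _ _ (by simp [List.length_take]; omega),
      List.getD_eq_getElem _ _ hj.2, List.getElem_take]
  rw [hg]; exact h j hj.2

lemma moranDelta_succ (c : ℕ → ℝ) (m : ℕ) :
    moranDelta c (m + 1) = moranDelta c m * c (m + 1) := by
  rw [moranDelta, moranDelta, Finset.prod_Icc_succ_top (by omega)]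

lemma moranDelta_pos {c : ℕ → ℝ} (hc : ∀ k, 1 ≤ k → 0 < c k) (m : ℕ) :
    0 < moranDelta c m :=
  Finset.prod_pos fun i hi => hc i (Finset.mem_Icc.1 hi).1

def moranTails (n : ℕ → ℕ) (b : ℕ) : ℕ → Finset (List ℕ)
  | 0 => {[]}
  | m + 1 => ((moranTails n b m) ×ˢ Finset.Icc 1 (n (b + m + 1))).image fun p => p.1 ++ [p.2]

lemma mem_moranTails {n : ℕ → ℕ} {b m : ℕ} {τ : List ℕ} :
    τ ∈ moranTails n b m ↔
      τ.length = m ∧ ∀ j, j < m → 1 ≤ τ.getD j 0 ∧ τ.getD j 0 ≤ n (b + j + 1) := by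
  induction m generalizing τ with
  | zero => simp [moranTails, List.length_eq_zero_iff]
  | succ m ih =>
    simp only [moranTails, Finset.mem_image, Finset.mem_product, Finset.mem_Icc, Prod.exists]
    constructor
    · rintro ⟨ρ, i, ⟨hρ, h1, h2⟩, rfl⟩
      obtain ⟨hlen, hcond⟩ := ih.1 hρ
      refine ⟨by simp [hlen], fun j hj => ?_⟩
      rcases lt_or_eq_of_le (Nat.lt_succ_iff.1 hj) with hj' | hj'
      · rw [List.getD_append _ _ _ _ (by omega)]; exact hcond j hj'
      · rw [hj', ← hlen, List.getD_append_right _ _ _ _ le_rfl, Nat.sub_self]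
        simp only [List.getD_cons_zero]
        exact ⟨h1, by rw [hlen]; exact h2⟩
    · rintro ⟨hlen, hcond⟩
      have hne : τ ≠ [] := by intro h; simp [h] at hlen
      have hm : τ.length - 1 = m := by omega
      refine ⟨τ.dropLast, τ.getLast hne, ⟨ih.2 ⟨by simp [hlen], fun j hj => ?_⟩, ?_, ?_⟩,
        List.dropLast_append_getLast hne⟩
      · have hjl : j < τ.length := by omega
        have hd : τ.dropLast.getD j 0 = τ.getD j 0 := by
          rw [List.getD_eq_getElem _ _ (by simp; omega), List.getD_eq_getElem _ _ hjl,
            List.getElem_dropLast]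
        rw [hd]
        exact hcond j (by omega)
      · rw [List.getLast_eq_getElem, ← List.getD_eq_getElem _ 0 (by omega), hm]
        exact (hcond m (by omega)).1
      · rw [List.getLast_eq_getElem, ← List.getD_eq_getElem _ 0 (by omega), hm]
        exact (hcond m (by omega)).2

lemma card_moranTails (n : ℕ → ℕ) (b m : ℕ) :
    (moranTails n b m).card ≤ ∏ j ∈ Finset.range m, n (b + j + 1) := by
  induction m with
  | zero => simp [moranTails]
  | succ m ih =>
    calc (moranTails n b (m+1)).card
        ≤ ((moranTails n b m) ×ˢ Finset.Icc 1 (n (b + m + 1))).card :=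
          Finset.card_image_le
      _ = (moranTails n b m).card * (n (b + m + 1)) := by
          rw [Finset.card_product, Nat.card_Icc, Nat.add_sub_cancel]
      _ ≤ _ := by
          rw [Finset.prod_range_succ]
          exact Nat.mul_le_mul_right _ ih

variable {n : ℕ → ℕ} {c : ℕ → ℝ} (S : HomMoranStructure n c)

lemma diam_I : ∀ σ : List ℕ, MoranWord n σ → Metric.diam (S.I σ) = moranDelta c σ.length := by
  intro σ
  induction σ using List.reverseRecOn with
  | nil => intro _; simp [S.root, Real.diam_Icc (by norm_num : (0:ℝ) ≤ 1), moranDelta]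
  | append_singleton ρ i ih =>
    intro h
    have hρ := mw_append_left h
    obtain ⟨h1, h2⟩ := mw_append_letter h
    rw [S.ratio ρ hρ i h1 h2, ih hρ, List.length_append, List.length_singleton,
      moranDelta_succ, mul_comm]

lemma I_eq_Icc {σ : List ℕ} (h : MoranWord n σ) :
    S.I σ = Set.Icc (sInf (S.I σ)) (sInf (S.I σ) + moranDelta c σ.length) := by
  obtain ⟨u, v, huv, heq⟩ := S.isClosedInterval σ h
  have hd := diam_I S σ h
  rw [heq, Real.diam_Icc huv] at hd
  rw [heq, csInf_Icc huv, ← hd]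
  ring_nf

lemma prefix_subset : ∀ (τ ρ : List ℕ), MoranWord n (ρ ++ τ) → S.I (ρ ++ τ) ⊆ S.I ρ := by
  intro τ
  induction τ using List.reverseRecOn with
  | nil => intro ρ _; simp
  | append_singleton τ' i ih =>
    intro ρ h
    rw [← List.append_assoc] at h ⊢
    have h' := mw_append_left h
    obtain ⟨h1, h2⟩ := mw_append_letter h
    exact (S.subset _ h' i h1 h2).trans (ih ρ h')

lemma interiors_disj : ∀ (m : ℕ) (σ σ' : List ℕ), MoranWord n σ → MoranWord n σ' →
    σ.length = m → σ'.length = m → σ ≠ σ' →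
    interior (S.I σ) ∩ interior (S.I σ') = ∅ := by
  intro m
  induction m with
  | zero =>
    intro σ σ' _ _ h h' hne
    exact absurd (by rw [List.length_eq_zero_iff.1 h, List.length_eq_zero_iff.1 h']) hne
  | succ m ih =>
    intro σ σ' hσ hσ' hl hl' hne
    obtain ⟨ρ, i, rfl⟩ := σ.eq_nil_or_concat.resolve_left (by intro h; simp [h] at hl)
    obtain ⟨ρ', i', rfl⟩ := σ'.eq_nil_or_concat.resolve_left (by intro h; simp [h] at hl')
    simp only [List.concat_eq_append] at hσ hσ' hl hl' hne ⊢
    have hρ := mw_append_left hσ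
    have hρ' := mw_append_left hσ'
    obtain ⟨hi1, hi2⟩ := mw_append_letter hσ
    obtain ⟨hi1', hi2'⟩ := mw_append_letter hσ'
    have hlρ : ρ.length = m := by simpa using hl
    have hlρ' : ρ'.length = m := by simpa using hl'
    by_cases hρρ : ρ = ρ'
    · subst hρρ
      have hii : i ≠ i' := by rintro rfl; exact hne rfl
      rcases hii.lt_or_gt with hlt | hlt
      · exact S.disj ρ hρ i i' hi1 hlt hi2'
      · rw [Set.inter_comm]; exact S.disj ρ hρ i' i hi1' hlt hi2
    · have hmain := ih ρ ρ' hρ hρ' hlρ hlρ' hρρ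
      have h1 : interior (S.I (ρ ++ [i])) ⊆ interior (S.I ρ) :=
        interior_mono (S.subset ρ hρ i hi1 hi2)
      have h2 : interior (S.I (ρ' ++ [i'])) ⊆ interior (S.I ρ') :=
        interior_mono (S.subset ρ' hρ' i' hi1' hi2')
      exact Set.eq_empty_of_subset_empty
        (hmain ▸ Set.inter_subset_inter h1 h2)

lemma sInf_sep (hc : ∀ k, 1 ≤ k → 0 < c k) {σ σ' : List ℕ} (hσ : MoranWord n σ)
    (hσ' : MoranWord n σ') (hl : σ.length = σ'.length) (hne : σ ≠ σ') :
    moranDelta c σ.length ≤ |sInf (S.I σ) - sInf (S.I σ')| := by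
  set L := moranDelta c σ.length with hL
  have hLpos : 0 < L := moranDelta_pos hc _
  by_contra hcon
  push_neg at hcon
  set a := sInf (S.I σ)
  set a' := sInf (S.I σ')
  have hdisj := interiors_disj S σ.length σ σ' hσ hσ' rfl hl.symm hne
  rw [I_eq_Icc S hσ, I_eq_Icc S hσ'] at hdisj
  rw [interior_Icc, interior_Icc, ← hl] at hdisj
  have : (max a a' + min (a + L) (a' + L)) / 2 ∈
      Set.Ioo a (a + L) ∩ Set.Ioo a' (a' + L) := by
    rw [abs_sub_lt_iff] at hcon
    constructor <;> constructor <;>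
      simp only [lt_min_iff, max_lt_iff, lt_div_iff₀ (by norm_num : (0:ℝ) < 2),
        div_lt_iff₀ (by norm_num : (0:ℝ) < 2)] <;>
      · rcases le_total a a' with hle | hle <;>
        rcases le_total (a + L) (a' + L) with hle2 | hle2 <;>
        simp [max_eq_left, max_eq_right, min_eq_left, min_eq_right, hle, hle2] <;>
        linarith [hcon.1, hcon.2]
  rw [hdisj] at this
  exact this

end Helpers

/-- For a homogeneous Moran set `E`: for `k ≥ 2`, `l ≥ 1`, `δ_k < R ≤ δ_{k-1}`,
`δ_{k+l+1} < r ≤ δ_{k+l}` and `x ∈ E`, `N_r(B(x,R) ∩ E) ≤ 4·n_k n_{k+1}⋯n_{k+l+1}`. -/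
theorem homMoran_coveringNumber_upper (n : ℕ → ℕ) (c : ℕ → ℝ)
    (hn : ∀ k, 1 ≤ k → 2 ≤ n k) (hc : ∀ k, 1 ≤ k → 0 < c k)
    (hnc : ∀ k, 1 ≤ k → (n k : ℝ) * c k < 1)
    (S : HomMoranStructure n c) (E : Set ℝ) (hE : E = moranSet S) :
    ∀ k l : ℕ, 2 ≤ k → 1 ≤ l → ∀ R : ℝ, moranDelta c k < R → R ≤ moranDelta c (k - 1) →
      ∀ r : ℝ, moranDelta c (k + l + 1) < r → r ≤ moranDelta c (k + l) → ∀ x ∈ E,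
        coveringNumber r (Metric.ball x R ∩ E) ≤
          ((4 * ∏ i ∈ Finset.Icc k (k + l + 1), n i : ℕ) : ℝ≥0∞) := by
  intro k l hk hl R hR1 hR2 r hr1 hr2 x hx
  classical
  set b := k - 1 with hbdef
  have hbk : b + 1 = k := by omega
  set L := moranDelta c b with hLdef
  have hLpos : 0 < L := moranDelta_pos hc b
  have hRL : R ≤ L := hR2
  have hRpos : 0 < R := lt_trans (moranDelta_pos hc k) hR1
  set m := k + l + 1 with hmdef
  set δ := moranDelta c m with hδdef
  have hδpos : 0 < δ := moranDelta_pos hc m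
  have hδr : δ < r := hr1
  -- the finset of level-(k-1) prefixes meeting the ball
  set P : Finset (List ℕ) :=
    (moranTails n 0 b).filter (fun η => (S.I η ∩ Metric.ball x R).Nonempty) with hPdef
  set T : Finset (List ℕ) := moranTails n b (l + 2) with hTdef
  set F : Finset ℝ := (P ×ˢ T).image (fun p => sInf (S.I (p.1 ++ p.2)) + δ / 2) with hFdef
  -- Moran-ness of elements of P
  have hPmoran : ∀ η ∈ P, MoranWord n η ∧ η.length = b := by
    intro η hη
    obtain ⟨h1, -⟩ := Finset.mem_filter.1 hη
    obtain ⟨hlen, hcond⟩ := mem_moranTails.1 h1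
    refine ⟨fun j hj => by simpa using hcond j (by omega), hlen⟩
  -- covering property
  have hcover : Metric.ball x R ∩ E ⊆ ⋃ y ∈ F, Metric.ball y r := by
    rintro z ⟨hzb, hzE⟩
    rw [hE] at hzE
    have hz' := Set.mem_iInter.1 hzE (k + l)
    simp only [Set.mem_iUnion] at hz'
    obtain ⟨σ, ⟨hσw, hσlen⟩, hzI⟩ := hz'
    have hσlen' : σ.length = m := by omega
    set η := σ.take b with hηdef
    set τ := σ.drop b with hτdef
    have hστ : η ++ τ = σ := List.take_append_drop b σ
    have hηlen : η.length = b := by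
      rw [hηdef, List.length_take, hσlen']; omega
    have hτlen : τ.length = l + 2 := by
      rw [hτdef, List.length_drop, hσlen']; omega
    have hηw : MoranWord n η := mw_take hσw b
    -- η ∈ P
    have hηT : η ∈ moranTails n 0 b := by
      refine mem_moranTails.2 ⟨hηlen, fun j hj => ?_⟩
      have := hηw j (by omega)
      simpa using this
    have hzIη : z ∈ S.I η := by
      have := prefix_subset S τ η (by rw [hστ]; exact hσw)
      rw [hστ] at this
      exact this hzI
    have hηP : η ∈ P := Finset.mem_filter.2 ⟨hηT, ⟨z, hzIη, hzb⟩⟩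
    -- τ ∈ T
    have hτT : τ ∈ T := by
      refine mem_moranTails.2 ⟨hτlen, fun j hj => ?_⟩
      have hd : τ.getD j 0 = σ.getD (b + j) 0 := by
        rw [List.getD_eq_getElem _ _ (by omega), List.getD_eq_getElem _ _ (by omega)]
        simp [hτdef]
      rw [hd]
      exact hσw (b + j) (by omega)
    -- z in the ball around the midpoint
    refine Set.mem_biUnion (Finset.mem_image.2 ⟨(η, τ), Finset.mem_product.2 ⟨hηP, hτT⟩, rfl⟩) ?_
    have hIcc := I_eq_Icc S hσw
    have hlen2 : σ.length = m := hσlen'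
    rw [hlen2] at hIcc
    rw [hIcc] at hzI
    obtain ⟨hz1, hz2⟩ := hzI
    rw [Metric.mem_ball, Real.dist_eq, hστ]
    rw [abs_sub_lt_iff]
    constructor <;> linarith
  -- cardinality bound
  have hP3 : P.card ≤ 3 := by
    have := Finset.card_le_card_of_injOn
      (s := P) (f := fun η => (⌊(sInf (S.I η) - (x - R - L)) / L⌋).toNat)
      (t := Finset.range 3) ?_ ?_
    · simpa using this
    · intro η hη
      show (⌊(sInf (S.I η) - (x - R - L)) / L⌋).toNat ∈ Finset.range 3
      obtain ⟨hηM, hηlen⟩ := hPmoran η hη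
      obtain ⟨-, z, hzI, hzb⟩ := Finset.mem_filter.1 hη |>.imp id fun h => h
      rw [I_eq_Icc S hηM, hηlen] at hzI
      rw [Metric.mem_ball, Real.dist_eq, abs_sub_lt_iff] at hzb
      set a := sInf (S.I η)
      have ha1 : a < x + R := by
        obtain ⟨h1, h2⟩ := hzI; linarith [hzb.1, hzb.2]
      have ha2 : x - R - L < a := by
        obtain ⟨h1, h2⟩ := hzI; linarith [hzb.1, hzb.2]
      have hup : (a - (x - R - L)) / L < 3 := by
        rw [div_lt_iff₀ hLpos]; linarith
      have hfl : ⌊(a - (x - R - L)) / L⌋ < 3 := by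
        have := Int.floor_lt.2 (by exact_mod_cast hup)
        exact_mod_cast this
      simp only [Finset.mem_range]
      omega
    · intro η hη η' hη' hfeq
      by_contra hne
      obtain ⟨hηM, hηlen⟩ := hPmoran η hη
      obtain ⟨hηM', hηlen'⟩ := hPmoran η' hη'
      have hsep := sInf_sep S hc hηM hηM' (by rw [hηlen, hηlen']) hne
      rw [hηlen] at hsep
      set a := sInf (S.I η)
      set a' := sInf (S.I η')
      -- lower bounds for floors
      have hpos : ∀ ζ ∈ P, 0 < (sInf (S.I ζ) - (x - R - L)) / L := by
        intro ζ hζ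
        obtain ⟨hζM, hζlen⟩ := hPmoran ζ hζ
        obtain ⟨-, z, hzI, hzb⟩ := Finset.mem_filter.1 hζ |>.imp id fun h => h
        rw [I_eq_Icc S hζM, hζlen] at hzI
        rw [Metric.mem_ball, Real.dist_eq, abs_sub_lt_iff] at hzb
        have hlt : x - R - L < sInf (S.I ζ) := by
          obtain ⟨h1, h2⟩ := hzI; linarith [hzb.1, hzb.2]
        exact div_pos (by linarith) hLpos
      have h0 : 0 ≤ ⌊(a - (x - R - L)) / L⌋ :=
        Int.floor_nonneg.2 (le_of_lt (hpos η hη))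
      have h0' : 0 ≤ ⌊(a' - (x - R - L)) / L⌋ :=
        Int.floor_nonneg.2 (le_of_lt (hpos η' hη'))
      have hfeq2 : (⌊(a - (x - R - L)) / L⌋).toNat = (⌊(a' - (x - R - L)) / L⌋).toNat := hfeq
      have hfeq' : ⌊(a - (x - R - L)) / L⌋ = ⌊(a' - (x - R - L)) / L⌋ := by omega
      -- |d - d'| < 1 where d, d' have equal floors
      have hd1 : (a - (x - R - L)) / L < (a' - (x - R - L)) / L + 1 := by
        calc (a - (x - R - L)) / L < ⌊(a - (x - R - L)) / L⌋ + 1 := Int.lt_floor_add_one _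
          _ = ⌊(a' - (x - R - L)) / L⌋ + 1 := by rw [hfeq']
          _ ≤ (a' - (x - R - L)) / L + 1 := by
              have := Int.floor_le ((a' - (x - R - L)) / L); linarith
      have hd2 : (a' - (x - R - L)) / L < (a - (x - R - L)) / L + 1 := by
        calc (a' - (x - R - L)) / L < ⌊(a' - (x - R - L)) / L⌋ + 1 := Int.lt_floor_add_one _
          _ = ⌊(a - (x - R - L)) / L⌋ + 1 := by rw [← hfeq']
          _ ≤ (a - (x - R - L)) / L + 1 := by
              have := Int.floor_le ((a - (x - R - L)) / L); linarith
      have habs : |a - a'| < L := by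
        have e1 : a - (x - R - L) < (a' - (x - R - L)) + L := by
          have h1' := (div_lt_iff₀ hLpos).1 hd1
          rw [add_mul, div_mul_cancel₀ _ (ne_of_gt hLpos), one_mul] at h1'
          exact h1'
        have e2 : a' - (x - R - L) < (a - (x - R - L)) + L := by
          have h2' := (div_lt_iff₀ hLpos).1 hd2
          rw [add_mul, div_mul_cancel₀ _ (ne_of_gt hLpos), one_mul] at h2'
          exact h2'
        rw [abs_sub_lt_iff]
        constructor <;> linarith
      rw [← hLdef] at hsep
      linarith [hsep, habs]
  have hTcard : T.card ≤ ∏ i ∈ Finset.Icc k (k + l + 1), n i := by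
    calc T.card ≤ ∏ j ∈ Finset.range (l + 2), n (b + j + 1) := card_moranTails n b (l + 2)
      _ = ∏ i ∈ Finset.Icc k (k + l + 1), n i := by
          rw [← Finset.Ico_add_one_right_eq_Icc, Finset.prod_Ico_eq_prod_range]
          have h2 : k + l + 1 + 1 - k = l + 2 := by omega
          rw [h2]
          exact Finset.prod_congr rfl fun j _ => by congr 1; omega
  have hFcard : F.card ≤ 4 * ∏ i ∈ Finset.Icc k (k + l + 1), n i := by
    calc F.card ≤ (P ×ˢ T).card := Finset.card_image_le
      _ = P.card * T.card := Finset.card_product _ _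
      _ ≤ 3 * ∏ i ∈ Finset.Icc k (k + l + 1), n i := Nat.mul_le_mul hP3 hTcard
      _ ≤ 4 * ∏ i ∈ Finset.Icc k (k + l + 1), n i := by
          exact Nat.mul_le_mul_right _ (by norm_num)
  calc coveringNumber r (Metric.ball x R ∩ E)
      ≤ (F.card : ℝ≥0∞) := sInf_le ⟨F, rfl, hcover⟩
    _ ≤ _ := by exact_mod_cast Nat.cast_le.2 hFcard
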